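/- Let a > b > 0, 0 < k < 1, k' = sqrt(1−k²), and define for s_1 ∈ [0, 2K(k)], s_2 ∈ [0, K(k)): x(s_1,s_2) = (sqrt(a−b)/k)·sn(s_1,k)·dn(s_2,k)/cn(s_2,k) and y(s_1,s_2) = (k'·sqrt(a−b)/k)·cn(s_1,k)/cn(s_2,k). Then for any constant η, the points (x(s_1, s_1+η), y(s_1, s_1+η)) satisfy the linear equation A x + B y = C with A·sqrt(a−b)/k = −C·sn(η,k) and B·k'·sqrt(a−b)/k = C·cn(η,k); moreover the coefficients satisfy a_0·(A/C)² + b_0·(B/C)² = 1 where a_0 = (a−b)/k² and b_0 = (a−b)(k')²/k², so each such line is tangent to the ellipse x²/a_0 + y²/b_0 = 1. -/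

import Mathlib

structure JacobiElliptic (k : ℝ) (sn cn dn : ℝ → ℝ) : Prop where
  sn_zero : sn 0 = 0
  cn_zero : cn 0 = 1
  dn_zero : dn 0 = 1
  diff_sn : Differentiable ℝ sn
  diff_cn : Differentiable ℝ cn
  diff_dn : Differentiable ℝ dn
  deriv_sn : ∀ t, deriv sn t = cn t * dn t
  deriv_cn : ∀ t, deriv cn t = -(sn t * dn t)
  deriv_dn : ∀ t, deriv dn t = -(k ^ 2 * sn t * cn t)

namespace JacobiElliptic

variable {k : ℝ} {sn cn dn : ℝ → ℝ} (hJ : JacobiElliptic k sn cn dn)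
include hJ

lemma hasDerivAt_sn (t : ℝ) : HasDerivAt sn (cn t * dn t) t :=
  hJ.deriv_sn t ▸ (hJ.diff_sn t).hasDerivAt

lemma hasDerivAt_cn (t : ℝ) : HasDerivAt cn (-(sn t * dn t)) t :=
  hJ.deriv_cn t ▸ (hJ.diff_cn t).hasDerivAt

lemma hasDerivAt_dn (t : ℝ) : HasDerivAt dn (-(k ^ 2 * sn t * cn t)) t :=
  hJ.deriv_dn t ▸ (hJ.diff_dn t).hasDerivAt

lemma pyth_sc : ∀ t, sn t ^ 2 + cn t ^ 2 = 1 := by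
  intro t
  have hd : Differentiable ℝ (fun t => sn t ^ 2 + cn t ^ 2) :=
    ((hJ.diff_sn.pow 2).add (hJ.diff_cn.pow 2))
  have h0 : ∀ s, deriv (fun t => sn t ^ 2 + cn t ^ 2) s = 0 := by
    intro s
    have h := (show HasDerivAt (fun t => sn t ^ 2 + cn t ^ 2) _ s from
      (((hJ.hasDerivAt_sn s).pow 2).add ((hJ.hasDerivAt_cn s).pow 2))).deriv
    rw [h]; push_cast; ring
  have := is_const_of_deriv_eq_zero hd h0 t 0
  simpa [hJ.sn_zero, hJ.cn_zero] using this

lemma pyth_dn : ∀ t, dn t ^ 2 + k ^ 2 * sn t ^ 2 = 1 := by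
  intro t
  have hd : Differentiable ℝ (fun t => dn t ^ 2 + k ^ 2 * sn t ^ 2) :=
    ((hJ.diff_dn.pow 2).add ((hJ.diff_sn.pow 2).const_mul _))
  have h0 : ∀ s, deriv (fun t => dn t ^ 2 + k ^ 2 * sn t ^ 2) s = 0 := by
    intro s
    have h := (show HasDerivAt (fun t => dn t ^ 2 + k ^ 2 * sn t ^ 2) _ s from
      (((hJ.hasDerivAt_dn s).pow 2).add
      (((hJ.hasDerivAt_sn s).pow 2).const_mul (k ^ 2)))).deriv
    rw [h]; push_cast; ring
  have := is_const_of_deriv_eq_zero hd h0 t 0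
  simpa [hJ.sn_zero, hJ.dn_zero] using this

lemma sn_sq_le_one (t : ℝ) : sn t ^ 2 ≤ 1 := by
  nlinarith [hJ.pyth_sc t, sq_nonneg (cn t)]

lemma den_pos (hk1 : k ^ 2 < 1) (u v : ℝ) : 0 < 1 - k ^ 2 * sn u ^ 2 * sn v ^ 2 := by
  nlinarith [hJ.sn_sq_le_one u, hJ.sn_sq_le_one v, sq_nonneg k,
    mul_le_one₀ (hJ.sn_sq_le_one u) (sq_nonneg (sn v)) (hJ.sn_sq_le_one v)]

lemma hasDerivAt_snc (c t : ℝ) :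
    HasDerivAt (fun t => sn (c - t)) (cn (c - t) * dn (c - t) * (-1)) t :=
  (hJ.hasDerivAt_sn (c - t)).comp t ((hasDerivAt_id t).const_sub c)

lemma hasDerivAt_cnc (c t : ℝ) :
    HasDerivAt (fun t => cn (c - t)) (-(sn (c - t) * dn (c - t)) * (-1)) t :=
  (hJ.hasDerivAt_cn (c - t)).comp t ((hasDerivAt_id t).const_sub c)

lemma hasDerivAt_dnc (c t : ℝ) :
    HasDerivAt (fun t => dn (c - t)) (-(k ^ 2 * sn (c - t) * cn (c - t)) * (-1)) t :=
  (hJ.hasDerivAt_dn (c - t)).comp t ((hasDerivAt_id t).const_sub c)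

lemma add_cn (hk1 : k ^ 2 < 1) (c : ℝ) : ∀ t,
    cn t * cn (c - t) - sn t * sn (c - t) * (dn t * dn (c - t)) =
      cn c * (1 - k ^ 2 * sn t ^ 2 * sn (c - t) ^ 2) := by
  have hDne : ∀ t : ℝ, (1 - k ^ 2 * (sn t ^ 2 * sn (c - t) ^ 2)) ≠ 0 := fun t => by
    have := (hJ.den_pos hk1 t (c - t)).ne'
    rwa [mul_assoc] at this
  set N : ℝ → ℝ := fun t => cn t * cn (c - t) - sn t * sn (c - t) * (dn t * dn (c - t)) with hN
  set D : ℝ → ℝ := fun t => 1 - k ^ 2 * (sn t ^ 2 * sn (c - t) ^ 2) with hD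
  have hNd : ∀ t, HasDerivAt N
      ((-(sn t * dn t)) * cn (c - t) + cn t * ((-(sn (c - t) * dn (c - t))) * (-1))
        - (((cn t * dn t) * sn (c - t) + sn t * (cn (c - t) * dn (c - t) * (-1))) *
            (dn t * dn (c - t))
          + sn t * sn (c - t) *
            ((-(k ^ 2 * sn t * cn t)) * dn (c - t)
              + dn t * (-(k ^ 2 * sn (c - t) * cn (c - t)) * (-1))))) t := fun t =>
    ((hJ.hasDerivAt_cn t).mul (hJ.hasDerivAt_cnc c t)).sub
      (((hJ.hasDerivAt_sn t).mul (hJ.hasDerivAt_snc c t)).mul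
        ((hJ.hasDerivAt_dn t).mul (hJ.hasDerivAt_dnc c t)))
  have hDd : ∀ t, HasDerivAt D
      (-(k ^ 2 * ((2 : ℕ) * sn t ^ (2-1) * (cn t * dn t) * sn (c - t) ^ 2
        + sn t ^ 2 * ((2 : ℕ) * sn (c - t) ^ (2-1) * (cn (c - t) * dn (c - t) * (-1)))))) t :=
    fun t => ((((hJ.hasDerivAt_sn t).pow 2).mul ((hJ.hasDerivAt_snc c t).pow 2)).const_mul
      (k ^ 2)).const_sub 1
  have hg0 : ∀ t, deriv (fun t => N t / D t) t = 0 := by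
    intro t
    rw [(show HasDerivAt (fun t => N t / D t) _ t from (hNd t).div (hDd t) (hDne t)).deriv,
      div_eq_zero_iff]
    left
    have e1 := hJ.pyth_sc t
    have e2 := hJ.pyth_dn t
    have e3 := hJ.pyth_sc (c - t)
    have e4 := hJ.pyth_dn (c - t)
    simp only [hN, hD]
    push_cast
    linear_combination
      (2 * sn t * dn t * sn (c - t) ^ 2 * cn (c - t) * k ^ 2) * e1 +
      (-(cn t * sn (c - t) * dn (c - t))
        - sn t ^ 2 * cn t * sn (c - t) ^ 3 * dn (c - t) * k ^ 2) * e2 +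
      (-(2 * sn t ^ 2 * cn t * sn (c - t) * dn (c - t) * k ^ 2)) * e3 +
      (sn t * dn t * cn (c - t)
        + sn t ^ 3 * dn t * sn (c - t) ^ 2 * cn (c - t) * k ^ 2) * e4
  have hdiff : Differentiable ℝ (fun t => N t / D t) := by
    apply Differentiable.div
    · exact (hJ.diff_cn.mul (hJ.diff_cn.comp (differentiable_const c |>.sub differentiable_id))).sub
        ((hJ.diff_sn.mul (hJ.diff_sn.comp (differentiable_const c |>.sub differentiable_id))).mul
          (hJ.diff_dn.mul (hJ.diff_dn.comp (differentiable_const c |>.sub differentiable_id))))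
    · exact (differentiable_const 1).sub
        (((hJ.diff_sn.pow 2).mul ((hJ.diff_sn.comp
          (differentiable_const c |>.sub differentiable_id)).pow 2)).const_mul _)
    · exact hDne
  intro t
  have hconst := is_const_of_deriv_eq_zero hdiff hg0 t 0
  have h0 : N 0 / D 0 = cn c := by
    simp [hN, hD, hJ.sn_zero, hJ.cn_zero, hJ.dn_zero]
  rw [h0] at hconst
  have h2 := (div_eq_iff (hDne t)).mp hconst
  simp only [hN, hD] at h2
  linear_combination h2

lemma add_dn (hk1 : k ^ 2 < 1) (c : ℝ) : ∀ t,
    dn t * dn (c - t) - k ^ 2 * (sn t * sn (c - t)) * (cn t * cn (c - t)) =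
      dn c * (1 - k ^ 2 * sn t ^ 2 * sn (c - t) ^ 2) := by
  have hDne : ∀ t : ℝ, (1 - k ^ 2 * (sn t ^ 2 * sn (c - t) ^ 2)) ≠ 0 := fun t => by
    have := (hJ.den_pos hk1 t (c - t)).ne'
    rwa [mul_assoc] at this
  set N : ℝ → ℝ := fun t => dn t * dn (c - t) - k ^ 2 * (sn t * sn (c - t)) * (cn t * cn (c - t))
    with hN
  set D : ℝ → ℝ := fun t => 1 - k ^ 2 * (sn t ^ 2 * sn (c - t) ^ 2) with hD
  have hNd : ∀ t, HasDerivAt N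
      ((-(k ^ 2 * sn t * cn t)) * dn (c - t) + dn t * (-(k ^ 2 * sn (c - t) * cn (c - t)) * (-1))
        - ((k ^ 2 * ((cn t * dn t) * sn (c - t) + sn t * (cn (c - t) * dn (c - t) * (-1)))) *
            (cn t * cn (c - t))
          + k ^ 2 * (sn t * sn (c - t)) *
            ((-(sn t * dn t)) * cn (c - t) + cn t * (-(sn (c - t) * dn (c - t)) * (-1))))) t :=
    fun t =>
    ((hJ.hasDerivAt_dn t).mul (hJ.hasDerivAt_dnc c t)).sub
      ((((hJ.hasDerivAt_sn t).mul (hJ.hasDerivAt_snc c t)).const_mul (k ^ 2)).mul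
        ((hJ.hasDerivAt_cn t).mul (hJ.hasDerivAt_cnc c t)))
  have hDd : ∀ t, HasDerivAt D
      (-(k ^ 2 * ((2 : ℕ) * sn t ^ (2-1) * (cn t * dn t) * sn (c - t) ^ 2
        + sn t ^ 2 * ((2 : ℕ) * sn (c - t) ^ (2-1) * (cn (c - t) * dn (c - t) * (-1)))))) t :=
    fun t => ((((hJ.hasDerivAt_sn t).pow 2).mul ((hJ.hasDerivAt_snc c t).pow 2)).const_mul
      (k ^ 2)).const_sub 1
  have hg0 : ∀ t, deriv (fun t => N t / D t) t = 0 := by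
    intro t
    rw [(show HasDerivAt (fun t => N t / D t) _ t from (hNd t).div (hDd t) (hDne t)).deriv,
      div_eq_zero_iff]
    left
    have e1 := hJ.pyth_sc t
    have e2 := hJ.pyth_dn t
    have e3 := hJ.pyth_sc (c - t)
    have e4 := hJ.pyth_dn (c - t)
    simp only [hN, hD]
    push_cast
    linear_combination
      (-(dn t * sn (c - t) * cn (c - t) * k ^ 2)
        - sn t ^ 2 * dn t * sn (c - t) ^ 3 * cn (c - t) * k ^ 4) * e1 +
      (2 * sn t * cn t * sn (c - t) ^ 2 * dn (c - t) * k ^ 2) * e2 +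
      (sn t * cn t * dn (c - t) * k ^ 2
        + sn t ^ 3 * cn t * sn (c - t) ^ 2 * dn (c - t) * k ^ 4) * e3 +
      (-(2 * sn t ^ 2 * dn t * sn (c - t) * cn (c - t) * k ^ 2)) * e4
  have hdiff : Differentiable ℝ (fun t => N t / D t) := by
    apply Differentiable.div
    · exact (hJ.diff_dn.mul (hJ.diff_dn.comp (differentiable_const c |>.sub differentiable_id))).sub
        (((hJ.diff_sn.mul (hJ.diff_sn.comp
          (differentiable_const c |>.sub differentiable_id))).const_mul _).mul
          (hJ.diff_cn.mul (hJ.diff_cn.comp (differentiable_const c |>.sub differentiable_id))))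
    · exact (differentiable_const 1).sub
        (((hJ.diff_sn.pow 2).mul ((hJ.diff_sn.comp
          (differentiable_const c |>.sub differentiable_id)).pow 2)).const_mul _)
    · exact hDne
  intro t
  have hconst := is_const_of_deriv_eq_zero hdiff hg0 t 0
  have h0 : N 0 / D 0 = dn c := by
    simp [hN, hD, hJ.sn_zero, hJ.cn_zero, hJ.dn_zero]
  rw [h0] at hconst
  have h2 := (div_eq_iff (hDne t)).mp hconst
  simp only [hN, hD] at h2
  linear_combination h2

/-- The key diagonal identity: `cn η cn s − sn η sn s dn(s+η) = cn(s+η)`. -/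
lemma diag_identity (hk1 : k ^ 2 < 1) (s η : ℝ) :
    cn η * cn s - sn η * sn s * dn (s + η) = cn (s + η) := by
  have hc := hJ.add_cn hk1 (s + η) s
  have hd := hJ.add_dn hk1 (s + η) s
  rw [add_sub_cancel_left] at hc hd
  have hDne := (hJ.den_pos hk1 s η).ne'
  have key : (cn η * cn s - sn η * sn s * dn (s + η) - cn (s + η)) *
      (1 - k ^ 2 * sn s ^ 2 * sn η ^ 2) = 0 := by
    linear_combination hc + sn η * sn s * hd
  rcases mul_eq_zero.mp key with h | h
  · linarith
  · exact absurd h hDne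

end JacobiElliptic


theorem diagonals_tangent_to_ellipse (a b k k' : ℝ) (hb : 0 < b) (hab : b < a)
    (hk0 : 0 < k) (hk1 : k < 1) (hk' : k' = Real.sqrt (1 - k ^ 2))
    (sn cn dn : ℝ → ℝ) (hJ : JacobiElliptic k sn cn dn)
    (K : ℝ) (hK0 : 0 < K) (hcnK : cn K = 0)
    (hcnpos : ∀ t ∈ Set.Ico (0 : ℝ) K, 0 < cn t)
    (x y : ℝ → ℝ → ℝ)
    (hx : ∀ s₁ s₂, x s₁ s₂ = Real.sqrt (a - b) / k * sn s₁ * (dn s₂ / cn s₂))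
    (hy : ∀ s₁ s₂, y s₁ s₂ = k' * Real.sqrt (a - b) / k * (cn s₁ / cn s₂)) :
    ∀ η : ℝ, ∃ A B C : ℝ, C ≠ 0 ∧
      A * Real.sqrt (a - b) / k = -(C * sn η) ∧
      B * (k' * Real.sqrt (a - b) / k) = C * cn η ∧
      (∀ s₁ ∈ Set.Icc (0 : ℝ) (2 * K), s₁ + η ∈ Set.Ico (0 : ℝ) K →
        A * x s₁ (s₁ + η) + B * y s₁ (s₁ + η) = C) ∧
      (a - b) / k ^ 2 * (A / C) ^ 2 + (a - b) * k' ^ 2 / k ^ 2 * (B / C) ^ 2 = 1 := by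
  intro η
  have habp : 0 < a - b := sub_pos.mpr hab
  have hsp : 0 < Real.sqrt (a - b) := Real.sqrt_pos.mpr habp
  have hsq : Real.sqrt (a - b) ^ 2 = a - b := Real.sq_sqrt habp.le
  have hk2 : k ^ 2 < 1 := by nlinarith
  have hk'p : 0 < k' := by rw [hk']; exact Real.sqrt_pos.mpr (by nlinarith)
  have hk'sq : k' ^ 2 = 1 - k ^ 2 := by rw [hk']; exact Real.sq_sqrt (by nlinarith)
  refine ⟨-(sn η) * k / Real.sqrt (a - b), cn η * k / (k' * Real.sqrt (a - b)), 1,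
    one_ne_zero, ?_, ?_, ?_, ?_⟩
  · field_simp
  · field_simp
  · intro s₁ _ hmem
    have hcn : 0 < cn (s₁ + η) := hcnpos _ hmem
    have key := hJ.diag_identity hk2 s₁ η
    rw [hx, hy]
    field_simp
    linear_combination key
  · have hp := hJ.pyth_sc η
    field_simp
    linear_combination (a - b) * hp - hsq
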